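/- Let c < v, 0 < q₂ < q₁ < 1, 0 < s < q₂(v-c)(1-q₁)/(1-q₁+q₂), and p₂ = (q₂(v-c)(1-q₁) - s(1-q₁+q₂))/(q₂(v-c)(1-q₁) - q₂s). Then with p̄ - c = (v-c)(1-q₁) + s(q₁-q₂)/q₂ and p̃₂ - c = (p̄-c)/(1-p₂q₁), we have p̃₂ - c = ((v-c)(1-q₁) - s)/(1-q₁), and moreover s/(q₂(1-p₂)) = p̃₂ - c. -/

import Mathlib

theorem stmt_16 (q₁ q₂ c v s : ℝ) (hcv : c < v) (hq2 : 0 < q₂) (hq21 : q₂ < q₁) (hq1 : q₁ < 1)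
    (hs0 : 0 < s) (hs : s < q₂ * (v - c) * (1 - q₁) / (1 - q₁ + q₂)) :
    let p₂ := (q₂ * (v - c) * (1 - q₁) - s * (1 - q₁ + q₂)) / (q₂ * (v - c) * (1 - q₁) - q₂ * s)
    let pbar := c + (v - c) * (1 - q₁) + s * (q₁ - q₂) / q₂
    let tp2 := c + (pbar - c) / (1 - p₂ * q₁)
    tp2 - c = ((v - c) * (1 - q₁) - s) / (1 - q₁) ∧
    s / (q₂ * (1 - p₂)) = tp2 - c := by
  intro p₂ pbar tp2
  have h1q : 0 < 1 - q₁ := by linarith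
  have hden : 0 < 1 - q₁ + q₂ := by linarith
  have hsA : s < (v - c) * (1 - q₁) := by
    have h := (lt_div_iff₀ hden).mp hs
    nlinarith
  have hD : 0 < q₂ * (v - c) * (1 - q₁) - q₂ * s := by nlinarith
  have hDne : q₂ * (v - c) * (1 - q₁) - q₂ * s ≠ 0 := ne_of_gt hD
  have hAne : (v - c) * (1 - q₁) - s ≠ 0 := ne_of_gt (sub_pos.mpr hsA)
  have e1 : 1 - p₂ = s * (1 - q₁) / (q₂ * (v - c) * (1 - q₁) - q₂ * s) := by
    show 1 - (q₂ * (v - c) * (1 - q₁) - s * (1 - q₁ + q₂)) / (q₂ * (v - c) * (1 - q₁) - q₂ * s) = _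
    field_simp
    ring
  have e2 : 1 - p₂ * q₁ =
      (1 - q₁) * (q₂ * (v - c) * (1 - q₁) + s * (q₁ - q₂)) / (q₂ * (v - c) * (1 - q₁) - q₂ * s) := by
    show 1 - (q₂ * (v - c) * (1 - q₁) - s * (1 - q₁ + q₂)) / (q₂ * (v - c) * (1 - q₁) - q₂ * s) * q₁ = _
    field_simp
    ring
  have hNum2 : 0 < (1 - q₁) * (q₂ * (v - c) * (1 - q₁) + s * (q₁ - q₂)) := by
    have h1 : 0 < q₂ * (v - c) * (1 - q₁) := by nlinarith
    have h2 : 0 < s * (q₁ - q₂) := by nlinarith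
    nlinarith
  have h2pos : 0 < 1 - p₂ * q₁ := by rw [e2]; positivity
  have h1pos : 0 < 1 - p₂ := by rw [e1]; positivity
  have hfirst : tp2 - c = ((v - c) * (1 - q₁) - s) / (1 - q₁) := by
    show c + (c + (v - c) * (1 - q₁) + s * (q₁ - q₂) / q₂ - c) / (1 - p₂ * q₁) - c = _
    rw [e2]
    have hNne : q₂ * (v - c) * (1 - q₁) + s * (q₁ - q₂) ≠ 0 := by nlinarith
    have hq2ne : q₂ ≠ 0 := ne_of_gt hq2
    have h1qne : 1 - q₁ ≠ 0 := ne_of_gt h1q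
    have hP : (c + (v - c) * (1 - q₁) + s * (q₁ - q₂) / q₂ - c) = (q₂ * (v - c) * (1 - q₁) + s * (q₁ - q₂)) / q₂ := by
      field_simp
      ring
    rw [hP]
    field_simp
    ring
  refine ⟨hfirst, ?_⟩
  rw [hfirst, e1]
  field_simp
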